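/- Giambelli–Thom–Porteous formula via residues: for distinct complex numbers λ₁,...,λ_n and θ₁,...,θ_k with k ≥ n, the sum ∑_{i=1}^{n} ∏_{j=1}^{k}(θ_j - λ_i) / ∏_{s≠i}(λ_s - λ_i) equals the coefficient c_{k-n+1} in the power series expansion of ∏_{j=1}^{k}(1+θ_j q)/∏_{i=1}^{n}(1+λ_i q) = ∑_{m≥0} c_m q^m. -/

import Mathlib

open Polynomial Finset

-- reflect 1 (X + C c) = 1 + C c * X
lemma reflect_one_X_add_C {R : Type*} [CommRing R] (c : R) :
    reflect 1 (X + C c : R[X]) = 1 + C c * X := by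
  rw [reflect_add, reflect_one_X, reflect_C, pow_one]

lemma reflect_prod_linear {ι : Type*} [DecidableEq ι] (s : Finset ι) (c : ι → ℂ) :
    reflect s.card (∏ j ∈ s, (X + C (c j))) = ∏ j ∈ s, (1 + C (c j) * X) := by
  induction s using Finset.induction with
  | empty => simp
  | @insert a s ha ih =>
      rw [Finset.prod_insert ha, Finset.prod_insert ha, Finset.card_insert_of_notMem ha,
        add_comm s.card 1, reflect_mul (X + C (c a)) _ (by simp [natDegree_X_add_C])
          ((natDegree_prod_le s fun j => X + C (c j)).trans (by simp [natDegree_X_add_C])),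
        reflect_one_X_add_C, ih]

-- Lagrange coefficient lemma
lemma lagrange_top_coeff {n : ℕ} (μ : Fin n → ℂ) (hμ : Function.Injective μ)
    (p : ℂ[X]) (hp : p.degree < n) :
    ∑ i, p.eval (μ i) / ∏ s ∈ Finset.univ.erase i, (μ i - μ s) = p.coeff (n - 1) := by
  have hinj : Set.InjOn μ (Finset.univ : Finset (Fin n)) := fun a _ b _ h => hμ h
  have hb : ∀ i : Fin n, (Lagrange.basis Finset.univ μ i).coeff (n - 1)
      = (∏ s ∈ Finset.univ.erase i, (μ i - μ s))⁻¹ := by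
    intro i
    have : Lagrange.basis Finset.univ μ i
        = C (∏ s ∈ Finset.univ.erase i, (μ i - μ s)⁻¹)
          * ∏ s ∈ Finset.univ.erase i, (X - C (μ s)) := by
      rw [Lagrange.basis, map_prod, ← Finset.prod_mul_distrib]
      exact Finset.prod_congr rfl fun s _ => rfl
    rw [this, coeff_C_mul]
    have hmonic : (∏ s ∈ Finset.univ.erase i, (X - C (μ s))).Monic :=
      monic_prod_of_monic _ _ fun s _ => monic_X_sub_C _
    have hdeg : (∏ s ∈ Finset.univ.erase i, (X - C (μ s))).natDegree = n - 1 := by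
      rw [natDegree_prod _ _ fun s _ => X_sub_C_ne_zero _]
      simp [Finset.card_erase_of_mem]
    rw [← hdeg, hmonic.coeff_natDegree, mul_one, ← Finset.prod_inv_distrib]
  have hpI : p = Lagrange.interpolate Finset.univ μ fun i => p.eval (μ i) :=
    Lagrange.eq_interpolate hinj (by simpa using hp)
  conv_rhs => rw [hpI]
  rw [Lagrange.interpolate]
  simp only [LinearMap.coe_mk, AddHom.coe_mk, finset_sum_coeff, coeff_C_mul]
  exact Finset.sum_congr rfl fun i _ => by rw [hb i, div_eq_mul_inv]

lemma coe_prod_one_add {n : ℕ} (c : Fin n → ℂ) :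
    ((∏ j, (1 + C (c j) * X) : ℂ[X]) : PowerSeries ℂ)
      = ∏ j, (1 + PowerSeries.C (R := ℂ) (c j) * PowerSeries.X) := by
  rw [← Polynomial.coeToPowerSeries.ringHom_apply, map_prod]
  refine Finset.prod_congr rfl fun j _ => ?_
  simp [Polynomial.coeToPowerSeries.ringHom_apply]

/-- Giambelli–Thom–Porteous via residues. For distinct
complex numbers `λ₁,…,λₙ`, numbers `θ₁,…,θ_k` with `k ≥ n`, the sum
`∑ᵢ ∏ⱼ(θⱼ - λᵢ) / ∏_{s≠i}(λ_s - λᵢ)` equals the coefficient `c_{k-n+1}` of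
`q^{k-n+1}` in the power series `∏ⱼ(1+θⱼq)/∏ᵢ(1+λᵢq) = ∑ c_m q^m`. -/
theorem stmt_4 (n k : ℕ) (hnk : n ≤ k)
    (lam : Fin n → ℂ) (hlam : Function.Injective lam) (θ : Fin k → ℂ) :
    (∑ i, (∏ j, (θ j - lam i)) / ∏ s ∈ Finset.univ.erase i, (lam s - lam i))
      = PowerSeries.coeff (R := ℂ) (k - n + 1)
          ((∏ j, (1 + PowerSeries.C (R := ℂ) (θ j) * PowerSeries.X)) *
            (∏ i, (1 + PowerSeries.C (R := ℂ) (lam i) * PowerSeries.X))⁻¹) := by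
  classical
  -- the polynomials
  set f : ℂ[X] := ∏ j, (X + C (θ j)) with hf
  set w : ℂ[X] := ∏ i, (X + C (lam i)) with hwdef
  have hw : w.Monic := monic_prod_of_monic _ _ fun i _ => monic_X_add_C _
  have hwdeg : w.natDegree = n := by
    rw [hwdef, natDegree_prod _ _ fun i _ => X_add_C_ne_zero _]
    simp [natDegree_X_add_C]
  have hfdeg : f.natDegree = k := by
    rw [hf, natDegree_prod _ _ fun j _ => X_add_C_ne_zero _]
    simp [natDegree_X_add_C]
  set r : ℂ[X] := f %ₘ w with hr
  set g : ℂ[X] := f /ₘ w with hg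
  have hkey : f = w * g + r := by
    rw [hr, hg, add_comm]; exact (modByMonic_add_div f w).symm
  have hrdeg : r.degree < (n : WithBot ℕ) := by
    have := degree_modByMonic_lt f hw
    rwa [degree_eq_natDegree hw.ne_zero, hwdeg] at this
  have hrnat : r.natDegree ≤ n - 1 := by
    rcases eq_or_ne r 0 with h0 | h0
    · simp [h0]
    · have := (natDegree_lt_iff_degree_lt h0).mpr hrdeg
      omega
  have hgdeg : g.natDegree ≤ k - n := by
    rw [hg, natDegree_divByMonic f hw, hfdeg, hwdeg]
  -- handle n = 0 separately
  rcases Nat.eq_zero_or_pos n with hn | hn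
  · subst hn
    rw [Finset.univ_eq_empty, Finset.sum_empty, Finset.prod_empty, inv_one, mul_one,
      ← coe_prod_one_add, Polynomial.coeff_coe]
    have h1 : (∏ j, (1 + C (θ j) * X) : ℂ[X]) = reflect k f := by
      rw [hf, ← reflect_prod_linear]
      simp
    rw [h1, coeff_reflect, revAt_eq_self_of_lt (by omega)]
    exact (Polynomial.coeff_eq_zero_of_natDegree_lt (by omega)).symm
  -- main case n ≥ 1
  -- polynomial identity via reflection
  have hreflr : reflect k r = reflect (n - 1) r * X ^ (k - n + 1) := by
    have hk : k = (n - 1) + (k - n + 1) := by omega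
    calc reflect k r = reflect ((n - 1) + (k - n + 1)) (r * 1) := by rw [← hk, mul_one]
      _ = reflect (n - 1) r * reflect (k - n + 1) 1 :=
          reflect_mul r 1 hrnat (by simp)
      _ = reflect (n - 1) r * X ^ (k - n + 1) := by
          rw [← Polynomial.C_1, reflect_C, Polynomial.C_1, one_mul]
  have hp : (∏ j, (1 + C (θ j) * X) : ℂ[X])
      = (∏ i, (1 + C (lam i) * X)) * reflect (k - n) g
        + reflect (n - 1) r * X ^ (k - n + 1) := by
    have h1 : (∏ j, (1 + C (θ j) * X) : ℂ[X]) = reflect k f := by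
      rw [hf, ← reflect_prod_linear]; simp
    have h2 : (∏ i, (1 + C (lam i) * X) : ℂ[X]) = reflect n w := by
      rw [hwdef, ← reflect_prod_linear]; simp
    rw [h1, h2, hkey, reflect_add, hreflr]
    congr 1
    have h3 := reflect_mul w g (le_of_eq hwdeg) hgdeg
    rwa [show n + (k - n) = k by omega] at h3
  -- move to power series
  set Q : PowerSeries ℂ := ∏ i, (1 + PowerSeries.C (R := ℂ) (lam i) * PowerSeries.X) with hQ
  have hQc : PowerSeries.constantCoeff (R := ℂ) Q = 1 := by
    rw [hQ, map_prod]
    refine Finset.prod_eq_one fun i _ => ?_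
    simp
  have hQinv : Q * Q⁻¹ = 1 := PowerSeries.mul_inv_cancel Q (by rw [hQc]; exact one_ne_zero)
  have hPS : (∏ j, (1 + PowerSeries.C (R := ℂ) (θ j) * PowerSeries.X)) * Q⁻¹
      = (↑(reflect (k - n) g) : PowerSeries ℂ)
        + (↑(reflect (n - 1) r) : PowerSeries ℂ) * Q⁻¹ * PowerSeries.X ^ (k - n + 1) := by
    rw [← coe_prod_one_add, hp]
    push_cast
    rw [coe_prod_one_add]
    rw [add_mul]
    congr 1
    · rw [mul_comm (Q : PowerSeries ℂ), mul_assoc, hQinv, mul_one]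
    · ring
  rw [hPS, map_add]
  have hcoeffg : PowerSeries.coeff (R := ℂ) (k - n + 1) (↑(reflect (k - n) g) : PowerSeries ℂ) = 0 := by
    rw [Polynomial.coeff_coe, coeff_reflect, revAt_eq_self_of_lt (by omega)]
    exact Polynomial.coeff_eq_zero_of_natDegree_lt (by omega)
  have hcoeffr : PowerSeries.coeff (R := ℂ) (k - n + 1)
      ((↑(reflect (n - 1) r) : PowerSeries ℂ) * Q⁻¹ * PowerSeries.X ^ (k - n + 1))
      = r.coeff (n - 1) := by
    have hmx := PowerSeries.coeff_mul_X_pow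
      ((↑(reflect (n - 1) r) : PowerSeries ℂ) * Q⁻¹) (k - n + 1) 0
    rw [zero_add] at hmx
    rw [hmx, PowerSeries.coeff_zero_eq_constantCoeff, map_mul,
      PowerSeries.constantCoeff_inv, hQc, inv_one, mul_one,
      Polynomial.constantCoeff_coe, coeff_reflect]
    congr 1
  rw [hcoeffg, hcoeffr, zero_add]
  -- now the Lagrange side
  have := lagrange_top_coeff (μ := fun i => -(lam i))
    (fun a b h => hlam (by simpa using neg_injective h)) r hrdeg
  rw [← this]
  refine Finset.sum_congr rfl fun i _ => ?_
  have hwe : w.eval (-(lam i)) = 0 := by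
    rw [hwdef, eval_prod]
    exact Finset.prod_eq_zero (Finset.mem_univ i) (by simp)
  have hre : r.eval (-(lam i)) = ∏ j, (θ j - lam i) := by
    have : r.eval (-(lam i)) = f.eval (-(lam i)) := by
      rw [hkey, eval_add, eval_mul, hwe, zero_mul, zero_add]
    rw [this, hf, eval_prod]
    refine Finset.prod_congr rfl fun j _ => ?_
    simp [sub_eq_neg_add]
  rw [hre]
  congr 1
  exact Finset.prod_congr rfl fun s _ => by ring
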